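/- Let p be an odd prime and n ≥ 1, m ≥ 0 integers with n - p + 3 ≤ m ≤ n + 2. Suppose g, h ≥ 0 and r ≥ 0 satisfy the Riemann–Hurwitz relation 2g - 2 = p(2h - 2) + r(p-1) with g = n(p-1)/2 and r ≥ m (r counts all branch points, including the m punctures). Then necessarily h = 0 and r = n + 2. -/
import Mathlib


/-- Riemann–Hurwitz arithmetic for odd `p` (Lemma 5.2(1)): if `g = n(p-1)/2`,
`n - p + 3 ≤ m ≤ n + 2`, `r ≥ m` and `2g - 2 = p(2h - 2) + r(p - 1)`, then `h = 0`
and `r = n + 2`. -/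
theorem stmt_7 (p : ℕ) (hp : p.Prime) (hodd : Odd p) (n m : ℕ) (hn : 1 ≤ n)
    (hm1 : (n : ℤ) - p + 3 ≤ m) (hm2 : m ≤ n + 2)
    (g h r : ℕ) (hg : 2 * g = n * (p - 1)) (hr : m ≤ r)
    (hRH : 2 * (g : ℤ) - 2 = p * (2 * (h : ℤ) - 2) + r * ((p : ℤ) - 1)) :
    h = 0 ∧ r = n + 2 := by
  have hp3 : 3 ≤ p := by
    rcases hodd with ⟨k, hk⟩
    have := hp.two_le
    omega
  have hp1 : (1 : ℕ) ≤ p := by omega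
  have hg' : 2 * (g : ℤ) = n * ((p : ℤ) - 1) := by
    have := congrArg (Nat.cast : ℕ → ℤ) hg
    push_cast [Nat.cast_sub hp1] at this
    linarith
  have key : ((n : ℤ) - r) * ((p : ℤ) - 1) = 2 * p * ((h : ℤ) - 1) + 2 := by
    linear_combination hRH - hg'
  have hq3 : (3 : ℤ) ≤ (p : ℤ) := by exact_mod_cast hp3
  have hh0 : h = 0 := by
    by_contra hne
    have hh1 : (1 : ℤ) ≤ (h : ℤ) := by exact_mod_cast Nat.one_le_iff_ne_zero.mpr hne
    set s : ℤ := (n : ℤ) - r with hs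
    have hpos : 2 ≤ s * ((p : ℤ) - 1) := by nlinarith
    have hs1 : 1 ≤ s := by nlinarith
    have hsle : s ≤ (p : ℤ) - 3 := by
      have : ((m : ℤ)) ≤ r := by exact_mod_cast hr
      omega
    have hdvd : (p : ℤ) ∣ (s + 2) := ⟨s - 2 * ((h : ℤ) - 1), by linarith [key]⟩
    have := Int.le_of_dvd (by omega) hdvd
    omega
  refine ⟨hh0, ?_⟩
  rw [hh0] at key
  push_cast at key
  have : ((n : ℤ) - r) * ((p : ℤ) - 1) = (-2) * ((p : ℤ) - 1) := by linarith
  have := mul_right_cancel₀ (by omega : ((p : ℤ) - 1) ≠ 0) this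
  omega
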